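/- There is no monic real polynomial of degree 4 with coefficient sign pattern (+,-,-,-,+) (all coefficients nonzero) having exactly 0 positive roots and exactly 2 negative roots counted with multiplicity. -/

import Mathlib

open Polynomial

/-- Number of positive real roots counted with multiplicity. -/
noncomputable def posRoots (p : Polynomial ℝ) : ℕ :=
  (p.roots.filter (fun x => 0 < x)).card

/-- Number of negative real roots counted with multiplicity. -/
noncomputable def negRoots (p : Polynomial ℝ) : ℕ :=
  (p.roots.filter (fun x => x < 0)).card

theorem grabiner_nonrealizable_deg4_minus (p : Polynomial ℝ)
    (hm : p.Monic) (hd : p.natDegree = 4)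
    (h3 : p.coeff 3 < 0) (h2 : p.coeff 2 < 0) (h1 : p.coeff 1 < 0)
    (h0 : 0 < p.coeff 0) :
    ¬ (posRoots p = 0 ∧ negRoots p = 2) := by
  rintro ⟨hpos, hneg⟩
  have hp0 : p ≠ 0 := hm.ne_zero
  unfold negRoots at hneg
  obtain ⟨a, b, hab⟩ := Multiset.card_eq_two.mp hneg
  have hamem : a ∈ p.roots.filter (fun x => x < 0) := by rw [hab]; simp
  have hbmem : b ∈ p.roots.filter (fun x => x < 0) := by rw [hab]; simp
  have ha : a < 0 := (Multiset.mem_filter.mp hamem).2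
  have hb : b < 0 := (Multiset.mem_filter.mp hbmem).2
  have hle : ({a, b} : Multiset ℝ) ≤ p.roots := hab ▸ Multiset.filter_le _ _
  have hdvd : (X - C a) * (X - C b) ∣ p := by
    have h1' := Polynomial.prod_multiset_X_sub_C_dvd p
    have h2' : (({a, b} : Multiset ℝ).map fun r => X - C r).prod ∣
        (p.roots.map fun r => X - C r).prod :=
      Multiset.prod_dvd_prod_of_le (Multiset.map_le_map hle)
    simpa using h2'.trans h1'
  obtain ⟨q, hpq⟩ := hdvd
  have hdm : ((X - C a) * (X - C b)).Monic := (monic_X_sub_C a).mul (monic_X_sub_C b)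
  have hqm : q.Monic := hdm.of_mul_monic_left (hpq ▸ hm)
  have hdd : ((X - C a) * (X - C b)).natDegree = 2 := by
    rw [Polynomial.natDegree_mul (X_sub_C_ne_zero a) (X_sub_C_ne_zero b),
      natDegree_X_sub_C, natDegree_X_sub_C]
  have hqd : q.natDegree = 2 := by
    have h := hd
    rw [hpq, Polynomial.natDegree_mul hdm.ne_zero hqm.ne_zero, hdd] at h
    omega
  set B := q.coeff 1 with hB
  set Cc := q.coeff 0 with hCc
  have hq2 : q = X ^ 2 + C B * X + C Cc := by
    ext n
    match n with
    | 0 => simp [coeff_X_pow, hCc]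
    | 1 => simp [coeff_X_pow, hB]
    | 2 =>
      have hlc : q.coeff 2 = 1 := by
        have := hqm.coeff_natDegree
        rwa [hqd] at this
      simp [hlc, coeff_X_pow]
    | (n + 3) =>
      rw [coeff_eq_zero_of_natDegree_lt (by omega : q.natDegree < n + 3)]
      simp [coeff_X_pow, coeff_C]
  have hform : (X - C a) * (X - C b) * (X ^ 2 + C B * X + C Cc)
      = X ^ 4 + C (B - a - b) * X ^ 3 + C (Cc - B * (a + b) + a * b) * X ^ 2
        + C (a * b * B - Cc * (a + b)) * X + C (a * b * Cc) := by
    simp only [C_add, C_sub, C_mul, C_neg]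
    ring
  have hpform : p = X ^ 4 + C (B - a - b) * X ^ 3 + C (Cc - B * (a + b) + a * b) * X ^ 2
        + C (a * b * B - Cc * (a + b)) * X + C (a * b * Cc) := by
    rw [hpq, hq2, hform]
  have hc3 : p.coeff 3 = B - a - b := by
    rw [hpform]
    simp only [coeff_add, coeff_C_mul, coeff_X_pow, coeff_X, coeff_C]
    norm_num
  have hc1 : p.coeff 1 = a * b * B - Cc * (a + b) := by
    rw [hpform]
    simp only [coeff_add, coeff_C_mul, coeff_X_pow, coeff_X, coeff_C]
    norm_num
  rw [hc3] at h3
  rw [hc1] at h1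
  -- key inequality: 4 * Cc < B ^ 2
  have hkey : 4 * Cc < B ^ 2 := by
    nlinarith [sq_nonneg (a - b), sq_nonneg (a + b), mul_pos (neg_pos.mpr ha) (neg_pos.mpr hb),
      sq_nonneg (a + b - B), sq_nonneg (a + b + B)]
  have hx0 : (0 : ℝ) < -B / 2 := by linarith
  have hev0 : 0 < p.eval 0 := by rwa [← coeff_zero_eq_eval_zero]
  have hevx : p.eval (-B / 2) < 0 := by
    rw [hpq, hq2]
    simp only [eval_mul, eval_add, eval_sub, eval_pow, eval_X, eval_C]
    have hfa : 0 < -B / 2 - a := by linarith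
    have hfb : 0 < -B / 2 - b := by linarith
    have hq : (-B / 2) ^ 2 + B * (-B / 2) + Cc < 0 := by nlinarith
    exact mul_neg_of_pos_of_neg (mul_pos hfa hfb) hq
  -- IVT gives a positive root
  have hcont : ContinuousOn (fun x => p.eval x) (Set.Icc 0 (-B / 2)) :=
    (Polynomial.continuous p).continuousOn
  have hsub := intermediate_value_Ioo' (le_of_lt hx0) hcont
  have hmem : (0 : ℝ) ∈ Set.Ioo (p.eval (-B / 2)) (p.eval 0) := ⟨hevx, hev0⟩
  obtain ⟨t, ht, htv⟩ := hsub hmem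
  have htroot : t ∈ p.roots := by
    rw [Polynomial.mem_roots hp0]
    exact htv
  have htpos : (0 : ℝ) < t := ht.1
  unfold posRoots at hpos
  rw [Multiset.card_eq_zero] at hpos
  have : t ∈ p.roots.filter (fun x => 0 < x) := Multiset.mem_filter.mpr ⟨htroot, htpos⟩
  rw [hpos] at this
  simp at this
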